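/- Let Ω be a bounded hyperconvex domain in ℂⁿ and μ a positive Borel measure on Ω with μ(Ω) > 0. Let u ∈ E¹(Ω) \ {0} with I_μ(u) < +∞. If (dd^c u)ⁿ ≤ (−λ₁(μ) u)ⁿ μ, then (dd^c u)ⁿ = (−λ₁(μ) u)ⁿ μ, i.e. any supersolution at the level λ₁(μ) is a solution of the eigenvalue problem. -/

import Mathlib

open MeasureTheory Filter Set
open scoped ENNReal Topology

noncomputable section

/-- `ℂⁿ`, identified with `Fin n → ℂ`. -/
abbrev Cn (n : ℕ) := Fin n → ℂ

/-- A real-valued function is plurisubharmonic on `Ω` if it is upper semicontinuous on `Ω`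
and satisfies the sub-mean value inequality on every closed complex disc contained in `Ω`. -/
def IsPsh {n : ℕ} (Ω : Set (Cn n)) (u : Cn n → ℝ) : Prop :=
  UpperSemicontinuousOn u Ω ∧
    ∀ a ∈ Ω, ∀ b : Cn n, ∀ r : ℝ, 0 < r →
      (∀ w : ℂ, ‖w‖ ≤ r → a + w • b ∈ Ω) →
      u a ≤ ⨍ θ in (0 : ℝ)..(2 * Real.pi),
        u (a + (((r : ℂ) * Complex.exp ((θ : ℂ) * Complex.I)) • b))

/-- A bounded hyperconvex domain: a bounded domain admitting a negative continuous
plurisubharmonic exhaustion function. -/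
def IsBoundedHyperconvex {n : ℕ} (Ω : Set (Cn n)) : Prop :=
  IsOpen Ω ∧ Ω.Nonempty ∧ Bornology.IsBounded Ω ∧
    ∃ ρ : Cn n → ℝ, ContinuousOn ρ Ω ∧ IsPsh Ω ρ ∧ (∀ z ∈ Ω, ρ z < 0) ∧
      ∀ c : ℝ, c < 0 → closure {z ∈ Ω | ρ z ≤ c} ⊆ Ω

/-- A setting for pluripotential theory on a bounded hyperconvex domain `Ω ⊂ ℂⁿ`:
the data of the domain together with the complex Monge-Ampère operator
`u ↦ (dd^c u)^n`, which assigns to (pluri)potentials a positive Borel measure,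
supported on `Ω`. -/
structure MASetting (n : ℕ) where
  /-- the domain -/
  Ω : Set (Cn n)
  hyperconvex : IsBoundedHyperconvex Ω
  /-- the complex Monge-Ampère operator `u ↦ (dd^c u)^n` -/
  MA : (Cn n → ℝ) → Measure (Cn n)
  MA_outside : ∀ u, MA u (Ωᶜ) = 0

namespace MASetting

variable {n : ℕ} (S : MASetting n)

/-- The Cegrell class `E⁰(Ω)`: bounded plurisubharmonic functions with boundary values `0`
and finite total Monge-Ampère mass. -/
def memE0 (u : Cn n → ℝ) : Prop :=
  IsPsh S.Ω u ∧ (∀ z ∈ S.Ω, u z ≤ 0) ∧ BddBelow (u '' S.Ω) ∧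
    (∀ ξ ∈ frontier S.Ω, Tendsto u (nhdsWithin ξ S.Ω) (nhds 0)) ∧
    S.MA u univ < ⊤

/-- The Cegrell class `E¹(Ω)`: plurisubharmonic functions admitting a decreasing sequence
in `E⁰(Ω)` converging to them pointwise with uniformly bounded Monge-Ampère energies. -/
def memE1 (u : Cn n → ℝ) : Prop :=
  IsPsh S.Ω u ∧
    ∃ (v : ℕ → Cn n → ℝ) (C : ℝ),
      (∀ j, S.memE0 (v j)) ∧
      (∀ j, ∀ z ∈ S.Ω, v (j + 1) z ≤ v j z) ∧
      (∀ z ∈ S.Ω, Tendsto (fun j => v j z) atTop (nhds (u z))) ∧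
      (∀ j, ∫⁻ z, ENNReal.ofReal (-(v j z)) ∂(S.MA (v j)) ≤ ENNReal.ofReal C)

/-- `u` is not identically `0` on `Ω` (i.e. `u ∈ E¹(Ω) \ {0}` when `u ∈ E¹(Ω)`). -/
def nonzero (u : Cn n → ℝ) : Prop := ∃ z ∈ S.Ω, u z ≠ 0

/-- The Monge-Ampère energy `E(u) = ∫_Ω (-u) (dd^c u)^n`. -/
def energy (u : Cn n → ℝ) : ℝ≥0∞ :=
  ∫⁻ z, ENNReal.ofReal (-(u z)) ∂(S.MA u)

/-- `I_μ(u) = ∫_Ω (-u)^(n+1) dμ`. -/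
def Ifun (μ : Measure (Cn n)) (u : Cn n → ℝ) : ℝ≥0∞ :=
  ∫⁻ z in S.Ω, ENNReal.ofReal ((-(u z)) ^ (n + 1)) ∂μ

/-- The Rayleigh-type quotient `R(u) = E(u) / I_μ(u)`. -/
def Rq (μ : Measure (Cn n)) (u : Cn n → ℝ) : ℝ≥0∞ := S.energy u / S.Ifun μ u

/-- `λ₁(μ)ⁿ := inf { E(u)/I_μ(u) : u ∈ E¹(Ω) \ {0}, I_μ(u) < ∞ }`. -/
def lambda1Pow (μ : Measure (Cn n)) : ℝ≥0∞ :=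
  sInf {r : ℝ≥0∞ | ∃ u : Cn n → ℝ, S.memE1 u ∧ S.nonzero u ∧ S.Ifun μ u ≠ ⊤ ∧ r = S.Rq μ u}

/-- The eigenvalue `λ₁(μ) = (λ₁(μ)ⁿ)^(1/n)`. -/
def lambda1 (μ : Measure (Cn n)) : ℝ≥0∞ := S.lambda1Pow μ ^ ((n : ℝ)⁻¹)

/-- The eigenvalue equation `(dd^c u)^n = (-λ u)^n μ`. -/
def eigenEq (μ : Measure (Cn n)) (lam : ℝ) (u : Cn n → ℝ) : Prop :=
  S.MA u = μ.withDensity fun z => ENNReal.ofReal ((lam * (-(u z))) ^ n)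

/-- `u` is a subsolution: `(dd^c u)^n ≥ (-λ u)^n μ`. -/
def subsolution (μ : Measure (Cn n)) (lam : ℝ) (u : Cn n → ℝ) : Prop :=
  (μ.withDensity fun z => ENNReal.ofReal ((lam * (-(u z))) ^ n)) ≤ S.MA u

/-- `u` is a supersolution: `(dd^c u)^n ≤ (-λ u)^n μ`. -/
def supersolution (μ : Measure (Cn n)) (lam : ℝ) (u : Cn n → ℝ) : Prop :=
  S.MA u ≤ μ.withDensity fun z => ENNReal.ofReal ((lam * (-(u z))) ^ n)

end MASetting

lemma usc_ext_measurable {n : ℕ} {Ω : Set (Cn n)} (hΩ : IsOpen Ω)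
    {u : Cn n → ℝ} (hu : UpperSemicontinuousOn u Ω) :
    Measurable (Ω.indicator u) := by
  have hopen : ∀ c : ℝ, IsOpen {z | z ∈ Ω ∧ u z < c} := by
    intro c
    rw [isOpen_iff_mem_nhds]
    rintro z ⟨hz, hzc⟩
    have hn : Ω ∈ 𝓝 z := hΩ.mem_nhds hz
    have h1 : {w | u w < c} ∈ 𝓝[Ω] z := hu z hz c hzc
    rw [nhdsWithin_eq_nhds.2 hn] at h1
    filter_upwards [h1, hn] with w h1w h2w
    exact ⟨h2w, h1w⟩
  apply measurable_of_Iio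
  intro c
  by_cases hc : (0:ℝ) < c
  · have he : (Ω.indicator u) ⁻¹' Iio c = {z | z ∈ Ω ∧ u z < c} ∪ Ωᶜ := by
      ext z
      by_cases hz : z ∈ Ω <;>
        simp [Set.indicator_of_mem, Set.indicator_of_notMem, hz, hc]
    rw [he]
    exact ((hopen c).measurableSet).union hΩ.measurableSet.compl
  · have he : (Ω.indicator u) ⁻¹' Iio c = {z | z ∈ Ω ∧ u z < c} := by
      ext z
      by_cases hz : z ∈ Ω <;>
        simp [Set.indicator_of_mem, Set.indicator_of_notMem, hz, hc]
    rw [he]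
    exact (hopen c).measurableSet

/-- any supersolution at the level `λ₁(μ)`, i.e. `u ∈ E¹(Ω) \ {0}` with
`I_μ(u) < ∞` and `(dd^c u)^n ≤ (-λ₁(μ) u)^n μ`, is a solution of the eigenvalue problem. -/
theorem statement5 {n : ℕ} (S : MASetting n) (μ : Measure (Cn n))
    (hμout : μ (S.Ωᶜ) = 0) (hμpos : 0 < μ S.Ω)
    (u : Cn n → ℝ) (hu : S.memE1 u) (hu0 : S.nonzero u) (huI : S.Ifun μ u ≠ ⊤)
    (hsuper : S.MA u ≤
      μ.withDensity fun z => S.lambda1Pow μ * ENNReal.ofReal ((-(u z)) ^ n)) :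
    S.MA u = μ.withDensity fun z => S.lambda1Pow μ * ENNReal.ofReal ((-(u z)) ^ n) := by
  obtain ⟨hΩopen, hΩne, hΩbd, hexh⟩ := S.hyperconvex
  have hΩm : MeasurableSet S.Ω := hΩopen.measurableSet
  set lam := S.lambda1Pow μ with hlam
  set ν := S.MA u with hν
  set σ := μ.withDensity (fun z => lam * ENNReal.ofReal ((-(u z)) ^ n)) with hσ
  obtain ⟨hpsh, v, C, hv0, hvdec, hvtend, hvE⟩ := hu
  have hu_le : ∀ z ∈ S.Ω, u z ≤ 0 := fun z hz =>
    le_of_tendsto (hvtend z hz) (Filter.Eventually.of_forall fun j => (hv0 j).2.1 z hz)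
  have hvanti : ∀ z ∈ S.Ω, Antitone fun j => v j z := fun z hz =>
    antitone_nat_of_succ_le fun j => hvdec j z hz
  have hulev : ∀ (j : ℕ), ∀ z ∈ S.Ω, u z ≤ v j z := fun j z hz =>
    le_of_tendsto (hvtend z hz)
      (Filter.eventually_atTop.2 ⟨j, fun k hk => hvanti z hz hk⟩)
  set ut : Cn n → ℝ := S.Ω.indicator u with hut
  have hutm : Measurable ut := usc_ext_measurable hΩopen hpsh.1
  have hut_le : ∀ z, ut z ≤ 0 := by
    intro z
    by_cases hz : z ∈ S.Ω
    · rw [hut, Set.indicator_of_mem hz]; exact hu_le z hz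
    · rw [hut, Set.indicator_of_notMem hz]
  set vt : ℕ → Cn n → ℝ := fun j => S.Ω.indicator (v j) with hvt
  have hvtm : ∀ j, Measurable (vt j) := fun j => usc_ext_measurable hΩopen ((hv0 j).1).1
  -- conversion of Ifun to integrals of measurable extensions
  have hconv : ∀ (w wt : Cn n → ℝ), (∀ z ∈ S.Ω, wt z = w z) →
      S.Ifun μ w = ∫⁻ z, ENNReal.ofReal ((-(wt z)) ^ (n+1)) ∂μ := by
    intro w wt hwt
    have h1 : S.Ifun μ w = ∫⁻ z in S.Ω, ENNReal.ofReal ((-(wt z)) ^ (n+1)) ∂μ := by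
      refine lintegral_congr_ae ?_
      filter_upwards [ae_restrict_mem hΩm] with z hz
      rw [hwt z hz]
    have h2 := lintegral_add_compl (μ := μ)
      (fun z => ENNReal.ofReal ((-(wt z)) ^ (n+1))) hΩm
    rw [setLIntegral_measure_zero _ _ hμout, add_zero] at h2
    exact h1.trans h2
  have hIu : S.Ifun μ u = ∫⁻ z, ENNReal.ofReal ((-(ut z)) ^ (n+1)) ∂μ :=
    hconv u ut fun z hz => Set.indicator_of_mem hz u
  have hIv : ∀ j, S.Ifun μ (v j) = ∫⁻ z, ENNReal.ofReal ((-(vt j z)) ^ (n+1)) ∂μ :=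
    fun j => hconv (v j) (vt j) fun z hz => Set.indicator_of_mem hz (v j)
  have hμae : ∀ᵐ z ∂μ, z ∈ S.Ω := by
    rw [ae_iff]
    exact hμout
  obtain ⟨z₀, hz₀, hz₀ne⟩ := hu0
  have hz₀lt : u z₀ < 0 := lt_of_le_of_ne (hu_le z₀ hz₀) hz₀ne
  -- case I = 0
  by_cases hI0 : S.Ifun μ u = 0
  · rcases Nat.eq_zero_or_pos n with hn | hn
    · exfalso
      have hzeq : ∀ z : Cn n, z = z₀ := fun z => funext fun i => absurd i.isLt (by omega)
      have hc : S.Ifun μ u = ENNReal.ofReal ((-(u z₀)) ^ (n+1)) * μ S.Ω := by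
        have := lintegral_congr (μ := μ.restrict S.Ω)
          (f := fun z => ENNReal.ofReal ((-(u z)) ^ (n+1)))
          (g := fun _ => ENNReal.ofReal ((-(u z₀)) ^ (n+1))) fun z => by rw [hzeq z]
        rw [MASetting.Ifun]
        rw [this, setLIntegral_const]
      rw [hc] at hI0
      have h1 : ENNReal.ofReal ((-(u z₀)) ^ (n+1)) ≠ 0 :=
        ne_of_gt (ENNReal.ofReal_pos.2 (pow_pos (neg_pos.2 hz₀lt) _))
      exact mul_ne_zero h1 hμpos.ne' hI0
    · have hσ0 : σ = 0 := by
        rw [hσ]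
        have hzero : (fun z => lam * ENNReal.ofReal ((-(u z)) ^ n)) =ᵐ[μ] 0 := by
          rw [hIu] at hI0
          have h2 := (lintegral_eq_zero_iff
            ((hutm.neg.pow_const (n+1)).ennreal_ofReal)).1 hI0
          filter_upwards [hμae, h2] with z hz h2z
          have h3 : (-(ut z)) ^ (n+1) ≤ 0 := by
            by_contra h
            push_neg at h
            exact (ne_of_gt (ENNReal.ofReal_pos.2 h)) h2z
          have h4 : -(ut z) = 0 := by
            have h5 : (-(ut z)) ^ (n+1) = 0 :=
              le_antisymm h3 (pow_nonneg (neg_nonneg.2 (hut_le z)) _)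
            exact pow_eq_zero_iff (Nat.succ_ne_zero n) |>.1 h5
          have h6 : u z = 0 := by
            rw [hut, Set.indicator_of_mem hz] at h4
            linarith
          simp [h6, zero_pow hn.ne']
        rw [withDensity_congr_ae hzero, withDensity_zero]
      rw [hσ0] at hsuper ⊢
      exact le_antisymm hsuper (Measure.zero_le ν)
  -- main case : I ≠ 0
  · have hlam_le : lam ≤ S.Rq μ u :=
      sInf_le ⟨u, ⟨hpsh, v, C, hv0, hvdec, hvtend, hvE⟩, ⟨z₀, hz₀, hz₀ne⟩, huI, rfl⟩
    -- monotone convergence : Ifun u = ⨆ Ifun (v j)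
    have hmono : Monotone fun j => fun z => ENNReal.ofReal ((-(vt j z)) ^ (n+1)) := by
      intro j k hjk z
      by_cases hz : z ∈ S.Ω
      · simp only [hvt, Set.indicator_of_mem hz]
        exact ENNReal.ofReal_le_ofReal (pow_le_pow_left₀
          (neg_nonneg.2 ((hv0 j).2.1 z hz)) (neg_le_neg (hvanti z hz hjk)) _)
      · simp only [hvt, Set.indicator_of_notMem hz]
        exact le_rfl
    have hsup : ∀ z, (⨆ j, ENNReal.ofReal ((-(vt j z)) ^ (n+1)))
        = ENNReal.ofReal ((-(ut z)) ^ (n+1)) := by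
      intro z
      by_cases hz : z ∈ S.Ω
      · have htend : Tendsto (fun j => ENNReal.ofReal ((-(vt j z)) ^ (n+1))) atTop
            (nhds (ENNReal.ofReal ((-(ut z)) ^ (n+1)))) := by
          simp only [hvt, hut, Set.indicator_of_mem hz]
          exact ENNReal.tendsto_ofReal (((hvtend z hz).neg).pow (n+1))
        exact tendsto_nhds_unique
          (tendsto_atTop_iSup fun a b hab => hmono hab z) htend
      · simp only [hvt, hut, Set.indicator_of_notMem hz, ciSup_const]
    have hImct : S.Ifun μ u = ⨆ j, S.Ifun μ (v j) := by
      rw [hIu]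
      have h1 : (fun z => ENNReal.ofReal ((-(ut z)) ^ (n+1)))
          = fun z => ⨆ j, ENNReal.ofReal ((-(vt j z)) ^ (n+1)) :=
        funext fun z => (hsup z).symm
      rw [h1, lintegral_iSup (f := fun j z => ENNReal.ofReal ((-(vt j z)) ^ (n+1)))
        (fun j => ((hvtm j).neg.pow_const (n+1)).ennreal_ofReal) hmono]
      exact iSup_congr fun j => (hIv j).symm
    have hex : ∃ j, S.Ifun μ (v j) ≠ 0 := by
      by_contra h
      push_neg at h
      rw [hImct] at hI0
      simp only [h, ciSup_const] at hI0
      exact hI0 trivial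
    obtain ⟨j, hIvj⟩ := hex
    have hIvj_le : S.Ifun μ (v j) ≤ S.Ifun μ u := by
      rw [MASetting.Ifun, MASetting.Ifun]
      refine lintegral_mono_ae ?_
      filter_upwards [ae_restrict_mem hΩm] with z hz
      exact ENNReal.ofReal_le_ofReal (pow_le_pow_left₀
        (neg_nonneg.2 ((hv0 j).2.1 z hz)) (neg_le_neg (hulev j z hz)) _)
    have hIvj_ne_top : S.Ifun μ (v j) ≠ ⊤ := ne_top_of_le_ne_top huI hIvj_le
    have hvjE1 : S.memE1 (v j) :=
      ⟨(hv0 j).1, fun _ => v j, C, fun _ => hv0 j, fun _ z _ => le_rfl,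
        fun z _ => tendsto_const_nhds, fun _ => hvE j⟩
    have hvjnz : S.nonzero (v j) := by
      by_contra h
      rw [MASetting.nonzero] at h
      push_neg at h
      apply hIvj
      rw [MASetting.Ifun]
      have h1 : ∀ᵐ z ∂(μ.restrict S.Ω),
          ENNReal.ofReal ((-(v j z)) ^ (n+1)) = 0 := by
        filter_upwards [ae_restrict_mem hΩm] with z hz
        rw [h z hz]
        simp
      rw [lintegral_congr_ae h1, lintegral_zero]
    have hlam_lt : lam < ⊤ := by
      have h1 : lam ≤ S.Rq μ (v j) := sInf_le ⟨v j, hvjE1, hvjnz, hIvj_ne_top, rfl⟩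
      have h2 : S.Rq μ (v j) ≤ ENNReal.ofReal C / S.Ifun μ (v j) :=
        ENNReal.div_le_div_right (hvE j) _
      exact lt_of_le_of_lt (h1.trans h2)
        (ENNReal.div_lt_top ENNReal.ofReal_ne_top hIvj)
    -- the density integrand
    set f : Cn n → ℝ≥0∞ := fun z => ENNReal.ofReal (-(ut z)) with hf
    have hfm : Measurable f := hutm.neg.ennreal_ofReal
    set gm : Cn n → ℝ≥0∞ := fun z => lam * ENNReal.ofReal ((-(ut z)) ^ n) with hgm
    have hgmm : Measurable gm := ((hutm.neg.pow_const n).ennreal_ofReal).const_mul lam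
    have hσt : σ = μ.withDensity gm := by
      rw [hσ]
      apply withDensity_congr_ae
      filter_upwards [hμae] with z hz
      simp only [hgm, hut, Set.indicator_of_mem hz]
    have hνΩc : ν S.Ωᶜ = 0 := S.MA_outside u
    have hνae : ∀ᵐ z ∂ν, z ∈ S.Ω := by
      rw [ae_iff]
      exact hνΩc
    have hEν : ∫⁻ z, f z ∂ν = S.energy u := by
      rw [MASetting.energy]
      refine lintegral_congr_ae ?_
      filter_upwards [hνae] with z hz
      simp only [hf, hut, Set.indicator_of_mem hz]
    have hEσ : ∫⁻ z, f z ∂σ = lam * S.Ifun μ u := by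
      rw [hσt, lintegral_withDensity_eq_lintegral_mul μ hgmm hfm]
      have h1 : (fun z => (gm * f) z)
          = fun z => lam * ENNReal.ofReal ((-(ut z)) ^ (n+1)) := by
        funext z
        simp only [Pi.mul_apply, hgm, hf]
        rw [mul_assoc, ← ENNReal.ofReal_mul (pow_nonneg (neg_nonneg.2 (hut_le z)) n),
          ← pow_succ]
      rw [h1, lintegral_const_mul lam (f := fun z => ENNReal.ofReal ((-(ut z)) ^ (n+1))) ((hutm.neg.pow_const (n+1)).ennreal_ofReal), ← hIu]
    have hEle : S.energy u ≤ lam * S.Ifun μ u := by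
      rw [← hEν, ← hEσ]
      exact lintegral_mono' hsuper le_rfl
    have hge : lam * S.Ifun μ u ≤ S.energy u := by
      have h1 := hlam_le
      rw [MASetting.Rq] at h1
      exact (ENNReal.le_div_iff_mul_le (Or.inl hI0) (Or.inl huI)).1 h1
    have hE : S.energy u = lam * S.Ifun μ u := le_antisymm hEle hge
    have hfin : lam * S.Ifun μ u ≠ ⊤ := ENNReal.mul_ne_top hlam_lt.ne huI
    have hint : ∫⁻ z, f z ∂ν = ∫⁻ z, f z ∂σ := by rw [hEν, hEσ, hE]
    -- key: set-integrals of f agree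
    have key : ∀ s : Set (Cn n), MeasurableSet s →
        ∫⁻ z in s, f z ∂ν = ∫⁻ z in s, f z ∂σ := by
      intro s hs
      have h1 : ∫⁻ z in s, f z ∂ν ≤ ∫⁻ z in s, f z ∂σ :=
        lintegral_mono' (Measure.restrict_mono (subset_refl s) hsuper) le_rfl
      have h2 : ∫⁻ z in sᶜ, f z ∂ν ≤ ∫⁻ z in sᶜ, f z ∂σ :=
        lintegral_mono' (Measure.restrict_mono (subset_refl sᶜ) hsuper) le_rfl
      have hν' := lintegral_add_compl (μ := ν) f hs
      have hσ' := lintegral_add_compl (μ := σ) f hs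
      have htot : ∫⁻ z in s, f z ∂σ + ∫⁻ z in sᶜ, f z ∂σ
          = ∫⁻ z in s, f z ∂ν + ∫⁻ z in sᶜ, f z ∂ν := by rw [hν', hσ', hint]
      have hcne : ∫⁻ z in sᶜ, f z ∂σ ≠ ⊤ := ne_top_of_le_ne_top hfin
        ((lintegral_mono' Measure.restrict_le_self le_rfl).trans hEσ.le)
      refine le_antisymm h1 ?_
      have h3 : ∫⁻ z in s, f z ∂σ + ∫⁻ z in sᶜ, f z ∂σ
          ≤ ∫⁻ z in s, f z ∂ν + ∫⁻ z in sᶜ, f z ∂σ :=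
        htot.le.trans (add_le_add le_rfl h2)
      exact (ENNReal.add_le_add_iff_right hcne).1 h3
    -- the sets E_k and U
    set Ek : ℕ → Set (Cn n) := fun k => {z | ut z ≤ -(1/(k+1:ℝ))} with hEk
    have hEkm : ∀ k, MeasurableSet (Ek k) := fun k => hutm measurableSet_Iic
    have hEkmono : Monotone Ek := by
      intro k l hkl z hz
      have h1 : (1:ℝ)/(l+1) ≤ 1/(k+1) :=
        one_div_le_one_div_of_le (by positivity) (by exact_mod_cast Nat.succ_le_succ hkl)
      simp only [hEk, mem_setOf_eq] at hz ⊢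
      linarith
    have hrestrict : ∀ k, ν.restrict (Ek k) = σ.restrict (Ek k) := by
      intro k
      have hwd_eq : (ν.restrict (Ek k)).withDensity f
          = (σ.restrict (Ek k)).withDensity f := by
        ext s hs
        rw [withDensity_apply f hs, withDensity_apply f hs,
          Measure.restrict_restrict hs, Measure.restrict_restrict hs]
        exact key (s ∩ Ek k) (hs.inter (hEkm k))
      have hne0 : ∀ (ρ : Measure (Cn n)), (∀ᵐ z ∂(ρ.restrict (Ek k)), z ∈ Ek k) →
          ∀ᵐ z ∂(ρ.restrict (Ek k)), f z ≠ 0 := by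
        intro ρ hρ
        filter_upwards [hρ] with z hz
        have h1 : (0:ℝ) < 1/(k+1:ℝ) := by positivity
        have h2 : (0:ℝ) < -(ut z) := by
          simp only [hEk, mem_setOf_eq] at hz
          linarith
        exact ne_of_gt (ENNReal.ofReal_pos.2 h2)
      calc ν.restrict (Ek k)
          = ((ν.restrict (Ek k)).withDensity f).withDensity (fun z => (f z)⁻¹) :=
            (withDensity_inv_same hfm (hne0 ν (ae_restrict_mem (hEkm k)))
              (Filter.Eventually.of_forall fun z => ENNReal.ofReal_ne_top)).symm
        _ = ((σ.restrict (Ek k)).withDensity f).withDensity (fun z => (f z)⁻¹) := by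
            rw [hwd_eq]
        _ = σ.restrict (Ek k) :=
            withDensity_inv_same hfm (hne0 σ (ae_restrict_mem (hEkm k)))
              (Filter.Eventually.of_forall fun z => ENNReal.ofReal_ne_top)
    set U : Set (Cn n) := {z | ut z < 0} with hU
    have hUm : MeasurableSet U := hutm measurableSet_Iio
    have hUeq : U = ⋃ k, Ek k := by
      ext z
      simp only [hU, hEk, mem_iUnion, mem_setOf_eq]
      constructor
      · intro hz
        obtain ⟨k, hk⟩ := exists_nat_one_div_lt (neg_pos.2 hz)
        exact ⟨k, by linarith⟩
      · rintro ⟨k, hk⟩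
        have h1 : (0:ℝ) < 1/(k+1:ℝ) := by positivity
        linarith
    have hσUc : σ Uᶜ = 0 := by
      rw [hσt, withDensity_apply _ hUm.compl]
      have hres0 : μ.restrict Uᶜ S.Ωᶜ = 0 :=
        le_antisymm ((Measure.le_iff'.1 Measure.restrict_le_self S.Ωᶜ).trans
          hμout.le) zero_le
      have hae2 : ∀ᵐ z ∂(μ.restrict Uᶜ), z ∈ S.Ω := by
        rw [ae_iff]
        exact hres0
      have hz0 : ∀ᵐ z ∂(μ.restrict Uᶜ), gm z = 0 := by
        filter_upwards [ae_restrict_mem hUm.compl, hae2] with z hz1 hz2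
        simp only [hU, mem_compl_iff, mem_setOf_eq, not_lt] at hz1
        have h0 : ut z = 0 := le_antisymm (hut_le z) hz1
        rcases Nat.eq_zero_or_pos n with hn | hn
        · exfalso
          apply hz₀ne
          have hz' : u z = 0 := by
            rw [hut, Set.indicator_of_mem hz2] at h0
            exact h0
          have hzz : z = z₀ := funext fun i => absurd i.isLt (by omega)
          rw [← hzz]
          exact hz'
        · simp only [hgm]
          rw [h0]
          simp [zero_pow hn.ne']
      rw [lintegral_congr_ae hz0, lintegral_zero]
    have hνUc : ν Uᶜ = 0 :=
      le_antisymm ((Measure.le_iff'.1 hsuper Uᶜ).trans hσUc.le) zero_le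
    ext s hs
    have hd1 : ν (s \ U) = 0 := measure_mono_null (fun z hz => hz.2) hνUc
    have hd2 : σ (s \ U) = 0 := measure_mono_null (fun z hz => hz.2) hσUc
    have hmain : ν (s ∩ U) = σ (s ∩ U) := by
      have hmono' : Monotone fun k => s ∩ Ek k :=
        fun k l hkl => inter_subset_inter_right s (hEkmono hkl)
      rw [hUeq, inter_iUnion, hmono'.measure_iUnion, hmono'.measure_iUnion]
      refine iSup_congr fun k => ?_
      calc ν (s ∩ Ek k) = ν.restrict (Ek k) s := (Measure.restrict_apply hs).symm
        _ = σ.restrict (Ek k) s := by rw [hrestrict k]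
        _ = σ (s ∩ Ek k) := Measure.restrict_apply hs
    calc ν s = ν (s ∩ U) + ν (s \ U) := (measure_inter_add_diff s hUm).symm
      _ = σ (s ∩ U) + σ (s \ U) := by rw [hd1, hd2, hmain]
      _ = σ s := measure_inter_add_diff s hUm
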